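/- arXiv:2004.06786 — 5 statements merged into one kernel-verified Lean document; each statement's English description precedes it below -/
import Mathlib

section
/- Let k > 0, θ ∈ ℝ, σ > 0, ν > 0, and define μ_p = (1/2)·√(θ² + 2σ²/ν) + θ/2 and μ_n = (1/2)·√(θ² + 2σ²/ν) − θ/2. Then for every u ∈ ℝ satisfying u·μ_p·ν < 1 and u·μ_n·ν > −1, the integral ∫₀^∞ −(1/ν)·log(1 − u·e^{-k·s}·θ·ν − u²·e^{-2k·s}·σ²·ν/2) ds converges and equals (1/(k·ν))·( dilog(u·μ_p·ν) + dilog(−u·μ_n·ν) ), where dilog(z) := −∫₀^z log(1 − y)/y dy. -/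
open Real MeasureTheory Set

/-- The real dilogarithm (Spence's function). -/
noncomputable def dilog (z : ℝ) : ℝ := -∫ y in (0:ℝ)..z, Real.log (1 - y) / y

lemma key_lemma (k c : ℝ) (hk : 0 < k) (hc : c < 1) :
    IntegrableOn (fun s => Real.log (1 - c * Real.exp (-k*s))) (Set.Ioi (0:ℝ)) ∧
    ∫ s in Set.Ioi (0:ℝ), Real.log (1 - c * Real.exp (-k*s)) = -(1/k) * dilog c := by
  rcases eq_or_ne c 0 with rfl | hc0
  · simp [dilog]
  have hk' : k ≠ 0 := hk.ne'
  set f : ℝ → ℝ := fun s => c * Real.exp (-k*s) with hfdef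
  set f' : ℝ → ℝ := fun s => (-k*c) * Real.exp (-k*s) with hf'def
  set g : ℝ → ℝ := fun y => Real.log (1 - y) / y with hgdef
  have a1 : ∀ s ∈ Set.Ioi (0:ℝ), HasDerivWithinAt f (f' s) (Set.Ioi 0) s := by
    intro s _
    have h1 : HasDerivAt (fun s : ℝ => -k*s) (-k) s := by
      simpa using (hasDerivAt_id s).const_mul (-k)
    have h2 := (h1.exp).const_mul c
    have h3 : c * (Real.exp (-k*s) * (-k)) = f' s := by simp only [hf'def]; ring
    rw [h3] at h2
    exact h2.hasDerivWithinAt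
  have a2 : Set.InjOn f (Set.Ioi 0) := by
    intro x _ y _ hxy
    have h1 := mul_left_cancel₀ hc0 hxy
    have h2 := Real.exp_injective h1
    exact mul_left_cancel₀ (neg_ne_zero.mpr hk') h2
  have gmeas : AEStronglyMeasurable g (volume : Measure ℝ) :=
    ((Real.measurable_log.comp (measurable_const.sub measurable_id)).div
      measurable_id).aestronglyMeasurable
  have hiff := integrableOn_image_iff_integrableOn_abs_deriv_smul measurableSet_Ioi a1 a2 g
  have hI := integral_image_eq_integral_abs_deriv_smul measurableSet_Ioi a1 a2 g
  rcases hc0.lt_or_gt with hneg | hpos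
  · -- c < 0, image is Ioo c 0
    have himg : f '' Set.Ioi 0 = Set.Ioo c 0 := by
      ext y
      simp only [Set.mem_image, Set.mem_Ioi, Set.mem_Ioo, hfdef]
      constructor
      · rintro ⟨s, hs, rfl⟩
        have he0 := Real.exp_pos (-k*s)
        have he1 : Real.exp (-k*s) < 1 := Real.exp_lt_one_iff.mpr (by nlinarith)
        constructor
        · nlinarith
        · exact mul_neg_of_neg_of_pos hneg he0
      · rintro ⟨hcy, hy0⟩
        refine ⟨Real.log (c/y) / k, ?_, ?_⟩
        · have hcy1 : (1:ℝ) < c / y := by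
            rw [show c/y = (-c)/(-y) by rw [neg_div_neg_eq]]
            rw [one_lt_div (by linarith)]
            linarith
          exact div_pos (Real.log_pos hcy1) hk
        · have hyne : y ≠ 0 := by linarith
          have h1 : -k * (Real.log (c/y) / k) = Real.log (y/c) := by
            rw [Real.log_div hc0 hyne, Real.log_div hyne hc0]
            field_simp
            ring
          rw [h1, Real.exp_log (by rw [show y/c = (-y)/(-c) by rw [neg_div_neg_eq]]; exact div_pos (by linarith) (by linarith))]
          field_simp
    have hgi : IntegrableOn g (Set.Ioo c 0) := by
      apply Measure.integrableOn_of_bounded (M := 1) (by simp) gmeas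
      filter_upwards [ae_restrict_mem measurableSet_Ioo] with y hy
      obtain ⟨hcy, hy0⟩ := hy
      have h1y : (1:ℝ) < 1 - y := by linarith
      have hlogpos : 0 ≤ Real.log (1 - y) := Real.log_nonneg h1y.le
      have hlogle : Real.log (1 - y) ≤ -y := by
        have := Real.log_le_sub_one_of_pos (by linarith : (0:ℝ) < 1 - y)
        linarith
      rw [Real.norm_eq_abs, hgdef]
      rw [abs_div, abs_of_nonneg hlogpos, abs_of_neg hy0]
      rw [div_le_one (by linarith)]
      linarith
    rw [himg] at hiff hI
    have heq : ∀ s : ℝ, |f' s| • g (f s) = -k * Real.log (1 - c * Real.exp (-k*s)) := by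
      intro s
      have he0 := Real.exp_pos (-k*s)
      have habs : |(-k*c) * Real.exp (-k*s)| = (-k*c) * Real.exp (-k*s) := by
        exact abs_of_pos (mul_pos (by nlinarith) he0)
      simp only [hf'def, hgdef, hfdef, smul_eq_mul, habs]
      field_simp
    have hint : IntegrableOn (fun s => -k * Real.log (1 - c * Real.exp (-k*s))) (Set.Ioi 0) :=
      (hiff.mp hgi).congr_fun (fun s _ => heq s) measurableSet_Ioi
    have hint2 : IntegrableOn (fun s => Real.log (1 - c * Real.exp (-k*s))) (Set.Ioi 0) := by
      have h2 : IntegrableOn (fun s => (-k)⁻¹ * (-k * Real.log (1 - c * Real.exp (-k*s))))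
          (Set.Ioi 0) := hint.const_mul (-k)⁻¹
      exact h2.congr_fun (fun s _ => by field_simp) measurableSet_Ioi
    refine ⟨hint2, ?_⟩
    have hval : ∫ y in Set.Ioo c 0, g y
        = -k * ∫ s in Set.Ioi (0:ℝ), Real.log (1 - c * Real.exp (-k*s)) := by
      rw [hI]
      simp_rw [heq]
      rw [integral_const_mul]
    have hdil : dilog c = ∫ y in Set.Ioo c 0, g y := by
      rw [dilog, intervalIntegral.integral_symm, intervalIntegral.integral_of_le hneg.le,
        integral_Ioc_eq_integral_Ioo]
      simp [hgdef]
    rw [hdil, hval]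
    field_simp
  · -- 0 < c, image is Ioo 0 c
    have himg : f '' Set.Ioi 0 = Set.Ioo 0 c := by
      ext y
      simp only [Set.mem_image, Set.mem_Ioi, Set.mem_Ioo, hfdef]
      constructor
      · rintro ⟨s, hs, rfl⟩
        have he0 := Real.exp_pos (-k*s)
        have he1 : Real.exp (-k*s) < 1 := Real.exp_lt_one_iff.mpr (by nlinarith)
        exact ⟨by positivity, by nlinarith⟩
      · rintro ⟨hy0, hyc⟩
        refine ⟨Real.log (c/y) / k, ?_, ?_⟩
        · exact div_pos (Real.log_pos ((one_lt_div hy0).mpr hyc)) hk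
        · have h1 : -k * (Real.log (c/y) / k) = Real.log (y/c) := by
            rw [Real.log_div hc0 hy0.ne', Real.log_div hy0.ne' hc0]
            field_simp
            ring
          rw [h1, Real.exp_log (div_pos hy0 hpos)]
          field_simp
    have hgi : IntegrableOn g (Set.Ioo 0 c) := by
      apply Measure.integrableOn_of_bounded (M := 1/(1-c)) (by simp) gmeas
      filter_upwards [ae_restrict_mem measurableSet_Ioo] with y hy
      obtain ⟨hy0, hyc⟩ := hy
      have h1y : (0:ℝ) < 1 - y := by linarith
      have h1c : (0:ℝ) < 1 - c := by linarith
      have hlognp : Real.log (1 - y) ≤ 0 := Real.log_nonpos (by linarith) (by linarith)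
      have hlogle : -Real.log (1 - y) ≤ y / (1 - y) := by
        have h := Real.log_le_sub_one_of_pos (inv_pos.mpr h1y)
        rw [Real.log_inv] at h
        have h2 : (1-y)⁻¹ - 1 = y / (1-y) := by field_simp; ring
        linarith
      have hlogle2 : -Real.log (1 - y) ≤ y / (1 - c) := by
        refine hlogle.trans ?_
        gcongr
      have hmul := mul_le_mul_of_nonneg_right hlogle2 h1c.le
      rw [div_mul_cancel₀ _ h1c.ne'] at hmul
      rw [Real.norm_eq_abs, hgdef]
      rw [abs_div, abs_of_nonpos hlognp, abs_of_pos hy0, div_le_div_iff₀ hy0 h1c]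
      linarith
    rw [himg] at hiff hI
    have heq : ∀ s : ℝ, |f' s| • g (f s) = k * Real.log (1 - c * Real.exp (-k*s)) := by
      intro s
      have he0 := Real.exp_pos (-k*s)
      have habs : |(-k*c) * Real.exp (-k*s)| = (k*c) * Real.exp (-k*s) := by
        rw [abs_of_neg (by nlinarith [mul_pos (mul_pos hk hpos) he0] : (-k*c) * Real.exp (-k*s) < 0)]
        ring
      simp only [hf'def, hgdef, hfdef, smul_eq_mul, habs]
      field_simp
    have hint : IntegrableOn (fun s => k * Real.log (1 - c * Real.exp (-k*s))) (Set.Ioi 0) :=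
      (hiff.mp hgi).congr_fun (fun s _ => heq s) measurableSet_Ioi
    have hint2 : IntegrableOn (fun s => Real.log (1 - c * Real.exp (-k*s))) (Set.Ioi 0) := by
      have h2 : IntegrableOn (fun s => k⁻¹ * (k * Real.log (1 - c * Real.exp (-k*s))))
          (Set.Ioi 0) := hint.const_mul k⁻¹
      exact h2.congr_fun (fun s _ => by field_simp) measurableSet_Ioi
    refine ⟨hint2, ?_⟩
    have hval : ∫ y in Set.Ioo 0 c, g y
        = k * ∫ s in Set.Ioi (0:ℝ), Real.log (1 - c * Real.exp (-k*s)) := by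
      rw [hI]
      simp_rw [heq]
      rw [integral_const_mul]
    have hdil : dilog c = -∫ y in Set.Ioo 0 c, g y := by
      rw [dilog, intervalIntegral.integral_of_le hpos.le, integral_Ioc_eq_integral_Ioo]
    rw [hdil, hval]
    field_simp


/-- Cumulant function of the stationary law of the OU-VG process
(the paper's Proposition, Equation (14)). -/
theorem ouvg_stationary_cumulant
    (k θ σ ν : ℝ) (hk : 0 < k) (hσ : 0 < σ) (hν : 0 < ν)
    (μp μn : ℝ)
    (hμp : μp = (1/2) * Real.sqrt (θ^2 + 2*σ^2/ν) + θ/2)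
    (hμn : μn = (1/2) * Real.sqrt (θ^2 + 2*σ^2/ν) - θ/2)
    (u : ℝ) (hup : u * μp * ν < 1) (hun : -1 < u * μn * ν) :
    IntegrableOn
        (fun s => -(1/ν) * Real.log (1 - u * Real.exp (-k*s) * θ * ν
          - u^2 * Real.exp (-2*k*s) * σ^2 * ν / 2)) (Set.Ioi (0:ℝ)) ∧
      ∫ s in Set.Ioi (0:ℝ),
          -(1/ν) * Real.log (1 - u * Real.exp (-k*s) * θ * ν
            - u^2 * Real.exp (-2*k*s) * σ^2 * ν / 2) =
        (1/(k*ν)) * (dilog (u*μp*ν) + dilog (-(u*μn*ν))) := by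
  have hfact : ∀ x : ℝ, 1 - u*x*θ*ν - u^2*x^2*σ^2*ν/2
      = (1 - (u*μp*ν)*x) * (1 + (u*μn*ν)*x) := by
    intro x
    have hs : Real.sqrt (θ^2 + 2*σ^2/ν) ^ 2 = θ^2 + 2*σ^2/ν :=
      Real.sq_sqrt (by positivity)
    have hs2 : Real.sqrt (θ^2 + 2*σ^2/ν) ^ 2 * ν = θ^2 * ν + 2*σ^2 := by
      rw [hs]; field_simp
    subst hμp hμn
    linear_combination (u^2*x^2*ν/4) * hs2
  have hpe : Set.EqOn
      (fun s => -(1/ν) * Real.log (1 - u * Real.exp (-k*s) * θ * ν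
          - u^2 * Real.exp (-2*k*s) * σ^2 * ν / 2))
      (fun s => -(1/ν) * Real.log (1 - (u*μp*ν) * Real.exp (-k*s))
          + -(1/ν) * Real.log (1 - (-(u*μn*ν)) * Real.exp (-k*s)))
      (Set.Ioi (0:ℝ)) := by
    intro s hs
    have hx0 : 0 < Real.exp (-k*s) := Real.exp_pos _
    have hx1 : Real.exp (-k*s) < 1 := Real.exp_lt_one_iff.mpr
      (by have := hs; simp only [Set.mem_Ioi] at this; nlinarith)
    have he2 : Real.exp (-2*k*s) = Real.exp (-k*s) ^ 2 := by
      rw [show -2*k*s = (-k*s) + (-k*s) by ring, Real.exp_add, sq]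
    have h1 : 0 < 1 - (u*μp*ν) * Real.exp (-k*s) := by
      nlinarith [mul_pos (sub_pos.mpr hup) hx0]
    have h2 : 0 < 1 + (u*μn*ν) * Real.exp (-k*s) := by
      nlinarith [mul_pos (show (0:ℝ) < 1 + u*μn*ν by linarith) hx0]
    simp only
    rw [show 1 - u * Real.exp (-k*s) * θ * ν - u^2 * Real.exp (-2*k*s) * σ^2 * ν / 2
        = (1 - (u*μp*ν) * Real.exp (-k*s)) * (1 + (u*μn*ν) * Real.exp (-k*s)) by
      rw [he2]
      have := hfact (Real.exp (-k*s))
      linarith [hfact (Real.exp (-k*s))]]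
    rw [Real.log_mul h1.ne' h2.ne',
      show (1:ℝ) - -(u*μn*ν) * Real.exp (-k*s) = 1 + (u*μn*ν) * Real.exp (-k*s) by ring]
    ring
  obtain ⟨hint1, hval1⟩ := key_lemma k (u*μp*ν) hk hup
  obtain ⟨hint2, hval2⟩ := key_lemma k (-(u*μn*ν)) hk (by linarith)
  have hintsum : IntegrableOn
      (fun s => -(1/ν) * Real.log (1 - (u*μp*ν) * Real.exp (-k*s))
          + -(1/ν) * Real.log (1 - (-(u*μn*ν)) * Real.exp (-k*s))) (Set.Ioi (0:ℝ)) :=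
    (hint1.const_mul (-(1/ν))).add (hint2.const_mul (-(1/ν)))
  refine ⟨hintsum.congr_fun (fun s hs => (hpe hs).symm) measurableSet_Ioi, ?_⟩
  rw [setIntegral_congr_fun measurableSet_Ioi hpe]
  rw [integral_add (hint1.const_mul (-(1/ν))) (hint2.const_mul (-(1/ν))),
    integral_const_mul, integral_const_mul, hval1, hval2]
  generalize dilog (u*μp*ν) = A
  generalize dilog (-(u*μn*ν)) = B
  field_simp
end

section
/- Let k > 0, t > 0, θ ∈ ℝ, σ > 0, ν > 0, and define μ_p = (1/2)·√(θ² + 2σ²/ν) + θ/2 and μ_n = (1/2)·√(θ² + 2σ²/ν) − θ/2. Then for every u ∈ ℝ satisfying u·μ_p·ν < 1 and u·μ_n·ν > −1, one has ∫₀^t −(1/ν)·log(1 − u·e^{-k·s}·θ·ν − u²·e^{-2k·s}·σ²·ν/2) ds = (1/(k·ν))·( dilog(u·μ_p·ν) − dilog(u·μ_p·ν·e^{-k·t}) + dilog(−u·μ_n·ν) − dilog(−u·μ_n·ν·e^{-k·t}) ), where dilog(z) := −∫₀^z log(1 − y)/y dy. -/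
open Real MeasureTheory Set Filter Topology

/-- Continuous extension of the dilog integrand. -/
noncomputable def dilogAux (y : ℝ) : ℝ := if y = 0 then -1 else Real.log (1 - y) / y

lemma dilogAux_of_ne {y : ℝ} (hy : y ≠ 0) : dilogAux y = Real.log (1 - y) / y := if_neg hy

lemma dilogAux_mul (z : ℝ) : dilogAux z * z = Real.log (1 - z) := by
  rcases eq_or_ne z 0 with rfl | hz
  · simp [dilogAux]
  · rw [dilogAux_of_ne hz, div_mul_cancel₀ _ hz]

lemma dilogAux_measurable : Measurable dilogAux := by
  unfold dilogAux
  exact Measurable.ite (measurableSet_eq) measurable_const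
    ((Real.measurable_log.comp (measurable_const.sub measurable_id)).div measurable_id)

lemma dilogAux_continuousAt {z : ℝ} (hz : z < 1) : ContinuousAt dilogAux z := by
  rcases eq_or_ne z 0 with rfl | hz0
  · have hd : HasDerivAt (fun y : ℝ => Real.log (1 - y)) (-1) 0 := by
      have h1 : HasDerivAt (fun y : ℝ => 1 - y) (-1) 0 := by
        simpa using (hasDerivAt_id (0:ℝ)).const_sub 1
      have := (Real.hasDerivAt_log (by norm_num : (1:ℝ) - 0 ≠ 0)).comp 0 h1
      rw [show ((1:ℝ) - 0)⁻¹ * -1 = -1 by norm_num] at this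
      exact this
    rw [hasDerivAt_iff_tendsto_slope] at hd
    have hslope : Filter.Tendsto dilogAux (𝓝[≠] (0:ℝ)) (𝓝 (-1)) := by
      refine hd.congr' ?_
      filter_upwards [self_mem_nhdsWithin] with y hy
      have hy0 : y ≠ 0 := hy
      rw [slope_def_field, dilogAux_of_ne hy0]
      simp
    have hpure : Filter.Tendsto dilogAux (pure (0:ℝ)) (𝓝 (-1)) := by
      have h := tendsto_pure_nhds dilogAux 0
      simpa [dilogAux] using h
    have : Filter.Tendsto dilogAux (𝓝[≠] (0:ℝ) ⊔ pure 0) (𝓝 (-1)) :=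
      hslope.sup hpure
    rw [nhdsNE_sup_pure] at this
    simpa [ContinuousAt, dilogAux] using this
  · have h1 : ContinuousAt (fun y : ℝ => Real.log (1 - y) / y) z := by
      refine ContinuousAt.div ?_ continuousAt_id hz0
      exact (Real.continuousAt_log (by linarith : (1:ℝ) - z ≠ 0)).comp
        ((continuousAt_const).sub continuousAt_id)
    refine h1.congr ?_
    filter_upwards [eventually_ne_nhds hz0] with y hy
    rw [dilogAux_of_ne hy]

lemma dilogAux_intervalIntegrable {z : ℝ} (hz : z < 1) :
    IntervalIntegrable dilogAux volume 0 z := by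
  apply ContinuousOn.intervalIntegrable
  intro y hy
  have hy1 : y < 1 := by
    rcases Set.mem_uIcc.mp hy with ⟨_, h⟩ | ⟨_, h⟩
    · linarith
    · linarith
  exact (dilogAux_continuousAt hy1).continuousWithinAt

lemma dilog_eq (z : ℝ) : dilog z = -∫ y in (0:ℝ)..z, dilogAux y := by
  unfold dilog
  congr 1
  apply intervalIntegral.integral_congr_ae
  have h0 : {(0:ℝ)}ᶜ ∈ ae (volume : Measure ℝ) := by
    rw [mem_ae_iff]
    simp
  filter_upwards [h0] with y hy _
  rw [dilogAux_of_ne hy]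

lemma dilog_hasDerivAt {z : ℝ} (hz : z < 1) : HasDerivAt dilog (-(dilogAux z)) z := by
  have heq : dilog = fun w => -∫ y in (0:ℝ)..w, dilogAux y := funext dilog_eq
  rw [heq]
  have h : HasDerivAt (fun w => ∫ y in (0:ℝ)..w, dilogAux y) (dilogAux z) z :=
    intervalIntegral.integral_hasDerivAt_right (dilogAux_intervalIntegrable hz)
      (dilogAux_measurable.stronglyMeasurable.stronglyMeasurableAtFilter)
      (dilogAux_continuousAt hz)
  exact h.neg

lemma scaled_lt_one {z e : ℝ} (hz : z < 1) (he0 : 0 < e) (he1 : e ≤ 1) : z * e < 1 := by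
  nlinarith

lemma dilog_comp_hasDerivAt {z k : ℝ} (hz : z < 1) (hk : 0 < k) {s : ℝ} (hs : 0 ≤ s) :
    HasDerivAt (fun s => dilog (z * Real.exp (-k*s)))
      (k * Real.log (1 - z * Real.exp (-k*s))) s := by
  have he0 : 0 < Real.exp (-k*s) := Real.exp_pos _
  have he1 : Real.exp (-k*s) ≤ 1 := by
    apply Real.exp_le_one_iff.mpr
    nlinarith
  have hlt : z * Real.exp (-k*s) < 1 := scaled_lt_one hz he0 he1
  have hinner : HasDerivAt (fun s : ℝ => z * Real.exp (-k*s))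
      (z * (Real.exp (-k*s) * (-k))) s := by
    have h1 : HasDerivAt (fun s : ℝ => -k*s) (-k) s := by
      simpa using (hasDerivAt_id s).const_mul (-k)
    exact ((Real.hasDerivAt_exp _).comp s h1).const_mul z
  have := (dilog_hasDerivAt hlt).comp s hinner
  refine this.congr_deriv ?_
  have hm := dilogAux_mul (z * Real.exp (-k*s))
  nlinarith [hm]

/-- Cumulant function of the increment of the OU-VG process over `[0, t]`
(the paper's Proposition, Equation (15)). -/
theorem ouvg_increment_cumulant
    (k t θ σ ν : ℝ) (hk : 0 < k) (ht : 0 < t) (hσ : 0 < σ) (hν : 0 < ν)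
    (μp μn : ℝ)
    (hμp : μp = (1/2) * Real.sqrt (θ^2 + 2*σ^2/ν) + θ/2)
    (hμn : μn = (1/2) * Real.sqrt (θ^2 + 2*σ^2/ν) - θ/2)
    (u : ℝ) (hup : u * μp * ν < 1) (hun : -1 < u * μn * ν) :
    ∫ s in (0:ℝ)..t,
        -(1/ν) * Real.log (1 - u * Real.exp (-k*s) * θ * ν
          - u^2 * Real.exp (-2*k*s) * σ^2 * ν / 2) =
      (1/(k*ν)) * (dilog (u*μp*ν) - dilog (u*μp*ν * Real.exp (-k*t))
        + dilog (-(u*μn*ν)) - dilog (-(u*μn*ν) * Real.exp (-k*t))) := by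
  set A := u*μp*ν with hAdef
  set C := -(u*μn*ν) with hCdef
  have hA1 : A < 1 := hup
  have hC1 : C < 1 := by rw [hCdef]; linarith
  have hsq : Real.sqrt (θ^2 + 2*σ^2/ν) ^ 2 = θ^2 + 2*σ^2/ν :=
    Real.sq_sqrt (by positivity)
  have hsq' : ν * Real.sqrt (θ^2 + 2*σ^2/ν) ^ 2 = ν * θ^2 + 2*σ^2 := by
    rw [hsq]; field_simp
  -- facts for s ≥ 0
  have hfac : ∀ s : ℝ, 0 ≤ s →
      (1 - u * Real.exp (-k*s) * θ * ν - u^2 * Real.exp (-2*k*s) * σ^2 * ν / 2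
        = (1 - A * Real.exp (-k*s)) * (1 - C * Real.exp (-k*s)))
      ∧ 0 < 1 - A * Real.exp (-k*s) ∧ 0 < 1 - C * Real.exp (-k*s) := by
    intro s hs
    have he0 : 0 < Real.exp (-k*s) := Real.exp_pos _
    have he1 : Real.exp (-k*s) ≤ 1 := by
      apply Real.exp_le_one_iff.mpr
      nlinarith
    refine ⟨?_, ?_, ?_⟩
    · have h2e : Real.exp (-2*k*s) = Real.exp (-k*s) ^ 2 := by
        rw [← Real.exp_nat_mul]
        norm_num
        ring_nf
      rw [h2e, hAdef, hCdef, hμp, hμn]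
      linear_combination (u^2 * ν * Real.exp (-k*s)^2/4) * hsq'
    · have := scaled_lt_one hA1 he0 he1; linarith
    · have := scaled_lt_one hC1 he0 he1; linarith
  have key : ∀ s ∈ Set.uIcc (0:ℝ) t,
      HasDerivAt (fun s => -(1/(k*ν)) *
          (dilog (A * Real.exp (-k*s)) + dilog (C * Real.exp (-k*s))))
        (-(1/ν) * Real.log (1 - u * Real.exp (-k*s) * θ * ν
          - u^2 * Real.exp (-2*k*s) * σ^2 * ν / 2)) s := by
    intro s hs
    rw [Set.uIcc_of_le ht.le] at hs
    have hs0 : 0 ≤ s := hs.1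
    have h1 := dilog_comp_hasDerivAt hA1 hk hs0
    have h2 := dilog_comp_hasDerivAt hC1 hk hs0
    have h := (h1.add h2).const_mul (-(1/(k*ν)))
    refine h.congr_deriv ?_
    obtain ⟨heq, hp1, hp2⟩ := hfac s hs0
    rw [heq, Real.log_mul hp1.ne' hp2.ne']
    field_simp
  have hint : IntervalIntegrable (fun s => -(1/ν) *
      Real.log (1 - u * Real.exp (-k*s) * θ * ν
        - u^2 * Real.exp (-2*k*s) * σ^2 * ν / 2)) volume 0 t := by
    apply ContinuousOn.intervalIntegrable
    apply ContinuousOn.mul continuousOn_const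
    apply ContinuousOn.log
    · fun_prop
    · intro s hs
      rw [Set.uIcc_of_le ht.le] at hs
      obtain ⟨heq, hp1, hp2⟩ := hfac s hs.1
      rw [heq]
      positivity
  have hFTC := intervalIntegral.integral_eq_sub_of_hasDerivAt key hint
  rw [hFTC]
  simp only [mul_zero, neg_zero, Real.exp_zero, mul_one]
  field_simp
  ring
end

section
/- Let k > 0, σ > 0, ν > 0, and let u ∈ ℝ satisfy u²·σ²·ν/2 < 1. Then the integral ∫₀^∞ −(1/ν)·log(1 − u²·e^{-2k·s}·σ²·ν/2) ds converges and equals (1/(2k·ν))·dilog(u²·σ²·ν/2), where dilog(z) := −∫₀^z log(1 − y)/y dy. -/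
open Real MeasureTheory Set

/-- `-log(1-y) ≤ y/(1-y)` for `0 ≤ y < 1`. -/
lemma neg_log_one_sub_le {y : ℝ} (hy0 : 0 ≤ y) (hy1 : y < 1) :
    -Real.log (1 - y) ≤ y / (1 - y) := by
  have h1 : (0:ℝ) < 1 - y := by linarith
  have := Real.one_sub_inv_le_log_of_pos h1
  have hinv : (1 - y)⁻¹ - 1 = y / (1 - y) := by
    field_simp
    ring
  linarith [this, hinv ▸ (le_refl ((1-y)⁻¹ - 1))]

lemma bound_h {y z : ℝ} (hy : y ∈ Set.Ioc 0 z) (hz1 : z < 1) :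
    ‖Real.log (1 - y) / y‖ ≤ 1 / (1 - z) := by
  obtain ⟨hy0, hyz⟩ := hy
  have hy1 : y < 1 := lt_of_le_of_lt hyz hz1
  have h1y : (0:ℝ) < 1 - y := by linarith
  have h1z : (0:ℝ) < 1 - z := by linarith
  have hlog : Real.log (1 - y) ≤ 0 := Real.log_nonpos (by linarith) (by linarith)
  have hb : -Real.log (1 - y) ≤ y / (1 - y) := neg_log_one_sub_le hy0.le hy1
  rw [Real.norm_eq_abs, abs_div, abs_of_nonpos hlog, abs_of_pos hy0]
  rw [div_le_div_iff₀ hy0 h1z]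
  have : -Real.log (1 - y) * (1 - z) ≤ (y / (1 - y)) * (1 - y) := by
    apply mul_le_mul hb (by linarith) (by linarith)
    positivity
  rw [div_mul_cancel₀ _ (ne_of_gt h1y)] at this
  linarith [this]

lemma intInt_h {z : ℝ} (hz1 : z < 1) (hz0 : 0 ≤ z) :
    IntervalIntegrable (fun y => Real.log (1 - y) / y) volume 0 z := by
  rw [intervalIntegrable_iff_integrableOn_Ioc_of_le hz0]
  apply Measure.integrableOn_of_bounded (M := 1/(1-z)) measure_Ioc_lt_top.ne
  · exact ((Real.measurable_log.comp (measurable_const.sub measurable_id)).div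
      measurable_id).aestronglyMeasurable
  · filter_upwards [ae_restrict_mem measurableSet_Ioc] with y hy
    exact bound_h hy hz1

lemma dilog_hasDerivAt_s7 {z : ℝ} (hz0 : 0 < z) (hz1 : z < 1) :
    HasDerivAt dilog (-(Real.log (1 - z) / z)) z := by
  have h := intervalIntegral.integral_hasDerivAt_right (intInt_h hz1 hz0.le)
    (((Real.measurable_log.comp (measurable_const.sub measurable_id)).div
      measurable_id).aestronglyMeasurable.stronglyMeasurableAtFilter)
    (by
      apply ContinuousAt.div
      · exact (Real.continuousAt_log (by linarith)).comp (by fun_prop)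
      · fun_prop
      · exact ne_of_gt hz0)
  exact h.neg

/-- `0 ≤ dilog z ≤ z/(1-c)` for `0 ≤ z ≤ c < 1`. -/
lemma dilog_bound {z c : ℝ} (hz0 : 0 ≤ z) (hzc : z ≤ c) (hc1 : c < 1) :
    dilog z ∈ Set.Icc 0 (z * (1 / (1 - c))) := by
  have hz1 : z < 1 := lt_of_le_of_lt hzc hc1
  have hint := intInt_h hz1 hz0
  constructor
  · rw [dilog, ← intervalIntegral.integral_neg]
    apply intervalIntegral.integral_nonneg hz0
    intro y hy
    rcases eq_or_lt_of_le hy.1 with h | h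
    · simp [← h]
    · have hy1 : y < 1 := lt_of_le_of_lt hy.2 hz1
      rw [neg_nonneg]
      exact div_nonpos_of_nonpos_of_nonneg (Real.log_nonpos (by linarith) (by linarith)) h.le
  · rw [dilog]
    have : -∫ y in (0:ℝ)..z, Real.log (1 - y) / y = ∫ y in (0:ℝ)..z, -(Real.log (1 - y) / y) := by
      rw [intervalIntegral.integral_neg]
    rw [this]
    calc ∫ y in (0:ℝ)..z, -(Real.log (1 - y) / y)
        ≤ ∫ _ in (0:ℝ)..z, 1 / (1 - c) := by
          apply intervalIntegral.integral_mono_on hz0 hint.neg intervalIntegrable_const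
          intro y hy
          rcases eq_or_lt_of_le hy.1 with h | h
          · rw [← h]
            have h0 : (-fun y => Real.log (1 - y) / y) (0:ℝ) = 0 := by simp
            rw [h0]
            exact div_nonneg one_pos.le (by linarith)
          · show -(Real.log (1 - y) / y) ≤ 1 / (1 - c)
            have := bound_h ⟨h, hy.2⟩ hz1
            rw [Real.norm_eq_abs] at this
            have hle : 1/(1-z) ≤ 1/(1-c) := by
              apply div_le_div_of_nonneg_left one_pos.le (by linarith) (by linarith)
            calc -(Real.log (1 - y) / y) ≤ |Real.log (1 - y) / y| := neg_le_abs _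
              _ ≤ 1/(1-z) := this
              _ ≤ 1/(1-c) := hle
      _ = z * (1 / (1 - c)) := by simp [mul_comm]

/-- Cumulant function of the stationary law of the symmetric OU-VG process
(the paper's Equation (18)). -/
theorem ousvg_stationary_cumulant
    (k σ ν u : ℝ) (hk : 0 < k) (hσ : 0 < σ) (hν : 0 < ν)
    (hu : u^2 * σ^2 * ν / 2 < 1) :
    IntegrableOn
        (fun s => -(1/ν) * Real.log (1 - u^2 * Real.exp (-2*k*s) * σ^2 * ν / 2))
        (Set.Ioi (0:ℝ)) ∧
      ∫ s in Set.Ioi (0:ℝ),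
          -(1/ν) * Real.log (1 - u^2 * Real.exp (-2*k*s) * σ^2 * ν / 2) =
        (1/(2*k*ν)) * dilog (u^2 * σ^2 * ν / 2) := by
  set c : ℝ := u^2 * σ^2 * ν / 2 with hc
  have hc0 : 0 ≤ c := by positivity
  rcases eq_or_lt_of_le hc0 with h0 | h0
  · -- degenerate case c = 0
    have hu0 : u ^ 2 = 0 := by
      by_contra h
      have h1 : 0 < u ^ 2 := lt_of_le_of_ne (sq_nonneg u) (Ne.symm h)
      have : 0 < c := by rw [hc]; positivity
      rw [← h0] at this; exact lt_irrefl 0 this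
    have heq : (fun s => -(1/ν) * Real.log (1 - u^2 * Real.exp (-2*k*s) * σ^2 * ν / 2))
        = fun _ : ℝ => (0:ℝ) := by
      funext s; rw [hu0]; simp
    have hd : dilog c = 0 := by
      rw [← h0, dilog, intervalIntegral.integral_same, neg_zero]
    rw [heq, hd]
    simp [integrableOn_const]
  · -- main case c > 0
    have hc1 : c < 1 := hu
    set f : ℝ → ℝ := fun s => -(1/ν) * Real.log (1 - u^2 * Real.exp (-2*k*s) * σ^2 * ν / 2)
      with hf
    set g : ℝ → ℝ := fun s => -(1/(2*k*ν)) * dilog (c * Real.exp (-2*k*s)) with hg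
    have hz : ∀ s : ℝ, 0 ≤ s → 0 < c * Real.exp (-2*k*s) ∧ c * Real.exp (-2*k*s) ≤ c := by
      intro s hs
      have he : Real.exp (-2*k*s) ≤ 1 := by
        rw [Real.exp_le_one_iff]
        have : 0 ≤ 2*k*s := by positivity
        linarith
      constructor
      · positivity
      · calc c * Real.exp (-2*k*s) ≤ c * 1 := by
              apply mul_le_mul_of_nonneg_left he hc0
          _ = c := mul_one c
    have hderiv : ∀ s ∈ Set.Ici (0:ℝ), HasDerivAt g (f s) s := by
      intro s hs
      obtain ⟨hz0, hzc⟩ := hz s hs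
      have hz1 : c * Real.exp (-2*k*s) < 1 := lt_of_le_of_lt hzc hc1
      have hinner : HasDerivAt (fun t => c * Real.exp (-2*k*t))
          (c * (Real.exp (-2*k*s) * (-2*k))) s := by
        have h1 : HasDerivAt (fun t : ℝ => -2*k*t) (-2*k) s := by
          simpa using (hasDerivAt_id s).const_mul (-2*k)
        exact (h1.exp.const_mul c)
      have hcomp := ((dilog_hasDerivAt_s7 hz0 hz1).comp s hinner).const_mul (-(1/(2*k*ν)))
      refine hcomp.congr_deriv ?_
      have harg : 1 - u^2 * Real.exp (-2*k*s) * σ^2 * ν / 2 = 1 - c * Real.exp (-2*k*s) := by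
        rw [hc]; ring
      rw [hf]
      simp only [harg]
      have hzne : c * Real.exp (-2*k*s) ≠ 0 := ne_of_gt hz0
      field_simp
    have hnonneg : ∀ s ∈ Set.Ioi (0:ℝ), 0 ≤ f s := by
      intro s hs
      obtain ⟨hz0, hzc⟩ := hz s (le_of_lt hs)
      have hz1 : c * Real.exp (-2*k*s) < 1 := lt_of_le_of_lt hzc hc1
      have harg : 1 - u^2 * Real.exp (-2*k*s) * σ^2 * ν / 2 = 1 - c * Real.exp (-2*k*s) := by
        rw [hc]; ring
      rw [hf]
      simp only [harg]
      have hlog : Real.log (1 - c * Real.exp (-2*k*s)) ≤ 0 :=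
        Real.log_nonpos (by linarith) (by linarith)
      have : 0 ≤ (1/ν) := by positivity
      nlinarith
    have htend : Filter.Tendsto g Filter.atTop (nhds 0) := by
      have hzt : Filter.Tendsto (fun s : ℝ => c * Real.exp (-2*k*s)) Filter.atTop (nhds 0) := by
        rw [show (0:ℝ) = c * 0 by ring]
        apply Filter.Tendsto.const_mul
        apply Real.tendsto_exp_atBot.comp
        apply Filter.Tendsto.const_mul_atTop_of_neg (by linarith : -2*k < 0) Filter.tendsto_id
      have hdt : Filter.Tendsto (fun s : ℝ => dilog (c * Real.exp (-2*k*s)))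
          Filter.atTop (nhds 0) := by
        apply squeeze_zero' (g := fun s : ℝ => c * Real.exp (-2*k*s) * (1/(1-c)))
        · filter_upwards [Filter.eventually_ge_atTop (0:ℝ)] with s hs
          exact (dilog_bound (hz s hs).1.le (hz s hs).2 hc1).1
        · filter_upwards [Filter.eventually_ge_atTop (0:ℝ)] with s hs
          exact (dilog_bound (hz s hs).1.le (hz s hs).2 hc1).2
        · rw [show (0:ℝ) = 0 * (1/(1-c)) by ring]
          exact hzt.mul_const _
      rw [hg, show (0:ℝ) = -(1/(2*k*ν)) * 0 by ring]
      exact hdt.const_mul _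
    constructor
    · exact integrableOn_Ioi_deriv_of_nonneg' hderiv hnonneg htend
    · rw [integral_Ioi_of_hasDerivAt_of_nonneg' hderiv hnonneg htend]
      rw [hg]
      simp only [mul_zero, neg_mul, neg_zero]
      rw [Real.exp_zero, mul_one]
      ring
end

section
/- Let k > 0, t > 0, σ > 0, ν > 0, and let u ∈ ℝ satisfy u²·σ²·ν/2 < 1. Then ∫₀^t −(1/ν)·log(1 − u²·e^{-2k·s}·σ²·ν/2) ds = (1/(2k·ν))·( dilog(u²·σ²·ν/2) − dilog(u²·σ²·ν·e^{-2k·t}/2) ), where dilog(z) := −∫₀^z log(1 − y)/y dy. -/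
open Real MeasureTheory Set

private lemma tendsto_log_one_sub_div :
    Filter.Tendsto (fun y : ℝ => Real.log (1 - y) / y) (nhdsWithin 0 {0}ᶜ) (nhds (-1)) := by
  have h : HasDerivAt (fun y : ℝ => Real.log (1 - y)) (-1) 0 := by
    have := (Real.hasDerivAt_log (by norm_num : (1:ℝ) - 0 ≠ 0)).comp 0
      ((hasDerivAt_id (0:ℝ)).const_sub 1)
    simpa [Function.comp_def] using this
  have := hasDerivAt_iff_tendsto_slope.mp h
  refine this.congr' ?_
  filter_upwards [self_mem_nhdsWithin] with y hy
  simp [slope_def_field, Real.log_one, sub_zero]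

private lemma intervalIntegrable_log_div (c : ℝ) (hc0 : 0 ≤ c) (hc : c < 1) :
    IntervalIntegrable (fun y : ℝ => Real.log (1 - y) / y) volume 0 c := by
  set g : ℝ → ℝ := fun y => if y = 0 then (-1:ℝ) else Real.log (1 - y) / y with hg
  have hgcont : ContinuousOn g (Icc 0 c) := by
    intro x hx
    rcases eq_or_ne x 0 with rfl | hx0
    · rw [ContinuousWithinAt]
      have h0 : g 0 = -1 := by simp [hg]
      rw [h0]
      have h1 : Filter.Tendsto g (nhdsWithin 0 {0}ᶜ) (nhds (-1)) := by
        refine tendsto_log_one_sub_div.congr' ?_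
        filter_upwards [self_mem_nhdsWithin] with y hy
        have hy' : y ≠ 0 := hy
        simp [hg, hy']
      have h2 : nhdsWithin (0:ℝ) (Icc 0 c) ≤ nhdsWithin 0 ({0}ᶜ) ⊔ pure 0 := by
        rw [nhdsNE_sup_pure]
        exact nhdsWithin_le_nhds
      refine Filter.Tendsto.mono_left ?_ h2
      rw [Filter.tendsto_sup]
      refine ⟨h1, ?_⟩
      rw [Filter.tendsto_pure_left]
      intro s hs
      exact mem_of_mem_nhds (by simpa [h0] using hs)
    · have hx1 : (1:ℝ) - x ≠ 0 := by
        have := hx.2; nlinarith [hx.1]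
      have : ContinuousAt (fun y : ℝ => Real.log (1 - y) / y) x :=
        ((Real.continuousAt_log hx1).comp (by fun_prop)).div continuousAt_id hx0
      have heq : g =ᶠ[nhds x] fun y : ℝ => Real.log (1 - y) / y := by
        filter_upwards [isOpen_compl_singleton.mem_nhds hx0] with y hy
        have hy' : y ≠ 0 := hy
        simp [hg, hy']
      exact (this.congr heq.symm).continuousWithinAt
  have hgint : IntervalIntegrable g volume 0 c := by
    apply ContinuousOn.intervalIntegrable
    rwa [uIcc_of_le hc0]
  rw [intervalIntegrable_iff_integrableOn_Ioc_of_le hc0]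
  have hgint' : IntegrableOn g (Ioc 0 c) volume :=
    (intervalIntegrable_iff_integrableOn_Ioc_of_le hc0).mp hgint
  refine hgint'.congr_fun (fun y hy => ?_) measurableSet_Ioc
  simp [hg, ne_of_gt hy.1]

/-- Cumulant function of the increment of the symmetric OU-VG process over
`[0, t]` (the paper's Equation (19)). -/
theorem ousvg_increment_cumulant
    (k t σ ν u : ℝ) (hk : 0 < k) (ht : 0 < t) (hσ : 0 < σ) (hν : 0 < ν)
    (hu : u^2 * σ^2 * ν / 2 < 1) :
    ∫ s in (0:ℝ)..t,
        -(1/ν) * Real.log (1 - u^2 * Real.exp (-2*k*s) * σ^2 * ν / 2) =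
      (1/(2*k*ν)) * (dilog (u^2 * σ^2 * ν / 2)
        - dilog (u^2 * σ^2 * ν * Real.exp (-2*k*t) / 2)) := by
  rcases eq_or_ne u 0 with rfl | hu0
  · simp [dilog]
  have hν' : ν ≠ 0 := ne_of_gt hν
  have hu2 : 0 < u ^ 2 := pow_two_pos_of_ne_zero hu0
  set A : ℝ := u ^ 2 * σ ^ 2 * ν / 2 with hAdef
  have hA : 0 < A := div_pos (mul_pos (mul_pos hu2 (pow_pos hσ 2)) hν) two_pos
  have hA1 : A < 1 := hu
  set b : ℝ := A * Real.exp (-2 * k * t) with hbdef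
  have hb0 : 0 < b := mul_pos hA (Real.exp_pos _)
  have hbA : b ≤ A := by
    have h1 : Real.exp (-2 * k * t) ≤ 1 := Real.exp_le_one_iff.mpr (by nlinarith)
    nlinarith
  have hb1 : b < 1 := lt_of_le_of_lt hbA hA1
  set g : ℝ → ℝ := fun y => (1 / (2 * k * ν)) * (Real.log (1 - y) / y) with hgdef
  set φ : ℝ → ℝ := fun s => A * Real.exp (-2 * k * s) with hφdef
  set φ' : ℝ → ℝ := fun s => (-(2 * k)) * (A * Real.exp (-2 * k * s)) with hφ'def
  have hφder : ∀ x ∈ uIcc (0:ℝ) t, HasDerivAt φ (φ' x) x := by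
    intro x _
    have h1 : HasDerivAt (fun s : ℝ => -2 * k * s) (-2 * k) x := by
      simpa using (hasDerivAt_id x).const_mul (-2 * k)
    have h2 := (Real.hasDerivAt_exp (-2 * k * x)).comp x h1
    have h3 := h2.const_mul A
    simp only [Function.comp] at h3
    refine h3.congr_deriv ?_
    rw [hφ'def]; ring
  have hφ'cont : ContinuousOn φ' (uIcc (0:ℝ) t) := by
    apply Continuous.continuousOn
    fun_prop
  have hgcont : ContinuousOn g (Icc b A) := by
    intro y hy
    have hy0 : y ≠ 0 := ne_of_gt (lt_of_lt_of_le hb0 hy.1)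
    have hy1 : (1:ℝ) - y ≠ 0 := by nlinarith [hy.2]
    have : ContinuousAt g y := by
      apply ContinuousAt.mul continuousAt_const
      exact ((Real.continuousAt_log hy1).comp (by fun_prop)).div continuousAt_id hy0
    exact this.continuousWithinAt
  have himg : φ '' (uIcc (0:ℝ) t) ⊆ Icc b A := by
    rintro _ ⟨s, hs, rfl⟩
    rw [uIcc_of_le ht.le] at hs
    constructor
    · have : Real.exp (-2 * k * t) ≤ Real.exp (-2 * k * s) :=
        Real.exp_le_exp.mpr (by nlinarith [hs.2])
      simp only [hφdef]
      nlinarith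
    · have : Real.exp (-2 * k * s) ≤ 1 := Real.exp_le_one_iff.mpr (by nlinarith [hs.1])
      simp only [hφdef]
      nlinarith
  have key := intervalIntegral.integral_comp_smul_deriv' hφder hφ'cont (hgcont.mono himg)
  have heq : EqOn (fun s => -(1 / ν) *
      Real.log (1 - u ^ 2 * Real.exp (-2 * k * s) * σ ^ 2 * ν / 2))
      (fun s => φ' s • (g ∘ φ) s) (uIcc (0:ℝ) t) := by
    intro s _
    have hφs : A * Real.exp (-2 * k * s) ≠ 0 := by positivity
    have harg : u ^ 2 * Real.exp (-2 * k * s) * σ ^ 2 * ν / 2 =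
        A * Real.exp (-2 * k * s) := by rw [hAdef]; ring
    simp only [harg, Function.comp, smul_eq_mul, hφdef, hφ'def, hgdef]
    field_simp
  rw [intervalIntegral.integral_congr heq, key]
  have hφ0 : φ 0 = A := by simp [hφdef]
  have hφt : φ t = b := by rw [hbdef]
  rw [hφ0, hφt]
  have hb' : u ^ 2 * σ ^ 2 * ν * Real.exp (-2 * k * t) / 2 = b := by
    rw [hbdef, hAdef]; ring
  rw [hb']
  have hsub : (∫ y in (0:ℝ)..b, Real.log (1 - y) / y) -
      ∫ y in (0:ℝ)..A, Real.log (1 - y) / y = ∫ y in A..b, Real.log (1 - y) / y :=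
    intervalIntegral.integral_interval_sub_left
      (intervalIntegrable_log_div b hb0.le hb1)
      (intervalIntegrable_log_div A hA.le hA1)
  rw [hgdef]
  rw [intervalIntegral.integral_const_mul, dilog, dilog, ← hsub]
  ring
end

section
/- Let α > 0, β > 0, k > 0, Δ > 0, and let u ∈ ℝ with u < β. Then (α/k)·∫_{e^{-kΔ}}^1 ( −log(1 − u·x/β) / x ) dx = α·Δ·log( β·e^{kΔ} / (β·e^{kΔ} − u) ) + (α·k·Δ²/2)·( ∫₀¹ β·e^{kΔ·√v} / (β·e^{kΔ·√v} − u) dv − 1 ). -/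
open Real

/-- Cumulant-function form of the Qu–Dassios–Zhao decomposition of the
increment of an OU-Γ process into a gamma random variable plus a compound
Poisson sum of exponential jumps with randomized rate. -/
theorem ou_gamma_increment_decomposition
    (α β k Δ u : ℝ) (hα : 0 < α) (hβ : 0 < β) (hk : 0 < k) (hΔ : 0 < Δ)
    (hu : u < β) :
    (α / k) * ∫ x in Real.exp (-k * Δ)..1, -Real.log (1 - u * x / β) / x =
      α * Δ * Real.log (β * Real.exp (k * Δ) / (β * Real.exp (k * Δ) - u)) +
        (α * k * Δ^2 / 2) *
          ((∫ v in (0:ℝ)..1,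
              β * Real.exp (k * Δ * Real.sqrt v)
                / (β * Real.exp (k * Δ * Real.sqrt v) - u)) - 1) := by
  have hden : ∀ s : ℝ, 0 ≤ s → 0 < β - u * Real.exp (-k * s) := by
    intro s hs
    have h1 : Real.exp (-k * s) ≤ 1 := Real.exp_le_one_iff.mpr (by nlinarith)
    have h2 : 0 < Real.exp (-k * s) := Real.exp_pos _
    rcases le_or_gt u 0 with h | h
    · nlinarith
    · nlinarith
  have hdenE : ∀ t : ℝ, 0 ≤ t → 0 < β * Real.exp t - u := by
    intro t ht
    have h1 : 1 ≤ Real.exp t := Real.one_le_exp ht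
    nlinarith
  have hden' : ∀ s : ℝ, 0 ≤ s → 0 < β * Real.exp (k * s) - u := by
    intro s hs
    exact hdenE _ (by positivity)
  have hwne : ∀ s : ℝ, 0 ≤ s → 1 - u * Real.exp (-k * s) / β ≠ 0 := by
    intro s hs
    have := hden s hs
    have : 0 < 1 - u * Real.exp (-k * s) / β := by
      rw [sub_pos, div_lt_one hβ]; linarith
    linarith
  -- Step A : substitution x = exp (-k s)
  have hA : (∫ x in Real.exp (-k * Δ)..1, -Real.log (1 - u * x / β) / x)
      = k * ∫ s in (0:ℝ)..Δ, -Real.log (1 - u * Real.exp (-k * s) / β) := by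
    have hsub := intervalIntegral.integral_comp_smul_deriv' (a := (0:ℝ)) (b := Δ)
        (f := fun s => Real.exp (-k * s)) (f' := fun s => -k * Real.exp (-k * s))
        (g := fun x => -Real.log (1 - u * x / β) / x)
        (fun s _ => by
          simpa [mul_comm] using (((hasDerivAt_id s).const_mul (-k)).exp))
        (by fun_prop)
        (by
          rintro x ⟨s, hs, rfl⟩
          rw [Set.uIcc_of_le hΔ.le] at hs
          have hx0 : (0:ℝ) < Real.exp (-k * s) := Real.exp_pos _
          have hne := hwne s hs.1
          set x := Real.exp (-k * s) with hxdef
          have c1 : ContinuousAt (fun y : ℝ => 1 - u * y / β) x := by fun_prop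
          have c2 : ContinuousAt (fun y : ℝ => Real.log (1 - u * y / β)) x :=
            c1.log hne
          have c3 : ContinuousAt (fun y : ℝ => -Real.log (1 - u * y / β) / y) x :=
            ContinuousAt.div c2.neg continuousAt_id hx0.ne'
          exact c3.continuousWithinAt)
    simp only [mul_zero, neg_zero, Real.exp_zero] at hsub
    rw [intervalIntegral.integral_symm, ← hsub, ← intervalIntegral.integral_neg,
      ← intervalIntegral.integral_const_mul]
    apply intervalIntegral.integral_congr
    intro s hs
    have hx0 : Real.exp (-k * s) ≠ 0 := (Real.exp_pos _).ne'
    simp only [smul_eq_mul, Function.comp]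
    field_simp
  -- Step B : substitution v = (s/Δ)^2
  have hB : (∫ v in (0:ℝ)..1, β * Real.exp (k * Δ * Real.sqrt v)
        / (β * Real.exp (k * Δ * Real.sqrt v) - u))
      = ∫ s in (0:ℝ)..Δ, (2 * s / Δ ^ 2) *
          (β * Real.exp (k * s) / (β * Real.exp (k * s) - u)) := by
    have hg : Continuous (fun v : ℝ => β * Real.exp (k * Δ * Real.sqrt v)
        / (β * Real.exp (k * Δ * Real.sqrt v) - u)) := by
      apply Continuous.div (by fun_prop) (by fun_prop)
      intro v
      exact (hdenE _ (by positivity)).ne'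
    have hsub := intervalIntegral.integral_comp_smul_deriv (a := (0:ℝ)) (b := Δ)
        (f := fun s => (s / Δ) ^ 2) (f' := fun s => 2 * s / Δ ^ 2)
        (g := fun v => β * Real.exp (k * Δ * Real.sqrt v)
          / (β * Real.exp (k * Δ * Real.sqrt v) - u))
        (fun s _ => by
          have := ((hasDerivAt_id s).div_const Δ).pow 2
          refine this.congr_deriv ?_
          have hΔ0 : Δ ≠ 0 := hΔ.ne'
          norm_num [id]
          field_simp)
        (by fun_prop) hg
    have h0 : ((0:ℝ) / Δ) ^ 2 = 0 := by simp
    have h1 : ((Δ:ℝ) / Δ) ^ 2 = 1 := by rw [div_self hΔ.ne']; norm_num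
    simp only [show (((0:ℝ) / Δ) ^ 2) = 0 from h0, h1] at hsub
    rw [← hsub]
    apply intervalIntegral.integral_congr
    intro s hs
    rw [Set.uIcc_of_le hΔ.le] at hs
    have hsq : Real.sqrt ((s / Δ) ^ 2) = s / Δ := Real.sqrt_sq (div_nonneg hs.1 hΔ.le)
    simp only [smul_eq_mul, Function.comp, hsq]
    have : k * Δ * (s / Δ) = k * s := by field_simp
    rw [this]
  -- Step C : integration by parts
  have hC : (∫ s in (0:ℝ)..Δ, -Real.log (1 - u * Real.exp (-k * s) / β))
      = Δ * (-Real.log (1 - u * Real.exp (-k * Δ) / β))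
        + k * ∫ s in (0:ℝ)..Δ,
            s * (β * Real.exp (k * s) / (β * Real.exp (k * s) - u) - 1) := by
    have hV : ∀ s : ℝ, 0 ≤ s →
        HasDerivAt (fun s => -Real.log (1 - u * Real.exp (-k * s) / β))
          (-(k * u * Real.exp (-k * s) / (β - u * Real.exp (-k * s)))) s := by
      intro s hs
      have hw : HasDerivAt (fun s : ℝ => 1 - u * Real.exp (-k * s) / β)
          (u * k * Real.exp (-k * s) / β) s := by
        have h1 : HasDerivAt (fun s : ℝ => Real.exp (-k * s)) (Real.exp (-k * s) * -k) s := by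
          simpa [mul_comm] using ((hasDerivAt_id s).const_mul (-k)).exp
        have h2 := ((h1.const_mul u).div_const β).const_sub 1
        refine h2.congr_deriv ?_
        ring
      have := (hw.log (hwne s hs)).neg
      refine this.congr_deriv ?_
      have h2 := hden s hs
      field_simp
    have hcontV' : ContinuousOn
        (fun s => -(k * u * Real.exp (-k * s) / (β - u * Real.exp (-k * s))))
        (Set.uIcc (0:ℝ) Δ) := by
      rw [Set.uIcc_of_le hΔ.le]
      apply ContinuousOn.neg
      apply ContinuousOn.div (by fun_prop) (by fun_prop)
      intro s hs
      exact (hden s hs.1).ne'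
    have hibp := intervalIntegral.integral_mul_deriv_eq_deriv_mul (a := (0:ℝ)) (b := Δ)
        (u := fun s => s) (u' := fun _ => (1:ℝ))
        (v := fun s => -Real.log (1 - u * Real.exp (-k * s) / β))
        (v' := fun s => -(k * u * Real.exp (-k * s) / (β - u * Real.exp (-k * s))))
        (fun s _ => hasDerivAt_id s)
        (fun s hs => hV s (by rw [Set.uIcc_of_le hΔ.le] at hs; exact hs.1))
        intervalIntegrable_const
        (hcontV'.intervalIntegrable)
    have hptwise : ∫ s in (0:ℝ)..Δ,
          s * -(k * u * Real.exp (-k * s) / (β - u * Real.exp (-k * s)))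
        = -(k * ∫ s in (0:ℝ)..Δ,
            s * (β * Real.exp (k * s) / (β * Real.exp (k * s) - u) - 1)) := by
      rw [← intervalIntegral.integral_const_mul, ← intervalIntegral.integral_neg]
      apply intervalIntegral.integral_congr
      intro s hs
      rw [Set.uIcc_of_le hΔ.le] at hs
      have h2 := hden s hs.1
      have h3 := hden' s hs.1
      have hee : Real.exp (-k * s) * Real.exp (k * s) = 1 := by
        rw [← Real.exp_add]; ring_nf; exact Real.exp_zero
      have key : Real.exp (-k * s) / (β - u * Real.exp (-k * s))
          = 1 / (β * Real.exp (k * s) - u) := by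
        rw [div_eq_div_iff h2.ne' h3.ne']
        linear_combination β * hee
      have hfrac : β * Real.exp (k * s) / (β * Real.exp (k * s) - u) - 1
          = u / (β * Real.exp (k * s) - u) := by
        field_simp
        ring
      simp only
      rw [hfrac, show k * u * Real.exp (-k * s) / (β - u * Real.exp (-k * s))
          = k * u * (Real.exp (-k * s) / (β - u * Real.exp (-k * s))) by ring, key]
      ring
    simp only [one_mul, zero_mul, mul_zero, sub_zero] at hibp
    rw [hptwise] at hibp
    linarith [hibp]
  -- the boundary log term
  have hE : Real.exp (-k * Δ) * Real.exp (k * Δ) = 1 := by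
    rw [← Real.exp_add]; ring_nf; exact Real.exp_zero
  have hE' : Real.exp (-(k * Δ)) * Real.exp (k * Δ) = 1 := by
    rw [← Real.exp_add]; ring_nf; exact Real.exp_zero
  have hEpos : 0 < β * Real.exp (k * Δ) := by positivity
  have hEu : 0 < β * Real.exp (k * Δ) - u := hden' Δ hΔ.le
  have hlog : -Real.log (1 - u * Real.exp (-k * Δ) / β)
      = Real.log (β * Real.exp (k * Δ) / (β * Real.exp (k * Δ) - u)) := by
    have h1 : 1 - u * Real.exp (-k * Δ) / β
        = (β * Real.exp (k * Δ) - u) / (β * Real.exp (k * Δ)) := by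
      rw [eq_div_iff hEpos.ne']
      field_simp
      linear_combination -u * hE'
    rw [h1, Real.log_div hEu.ne' hEpos.ne', Real.log_div hEpos.ne' hEu.ne']
    ring
  -- split the second integral
  have hintf : IntervalIntegrable
      (fun s => (2 * s / Δ ^ 2) * (β * Real.exp (k * s) / (β * Real.exp (k * s) - u)))
      MeasureTheory.volume 0 Δ := by
    apply ContinuousOn.intervalIntegrable
    rw [Set.uIcc_of_le hΔ.le]
    apply ContinuousOn.mul (by fun_prop)
    apply ContinuousOn.div (by fun_prop) (by fun_prop)
    intro s hs
    exact (hden' s hs.1).ne'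
  have hint2 : IntervalIntegrable (fun s : ℝ => 2 * s / Δ ^ 2)
      MeasureTheory.volume 0 Δ := (by fun_prop : Continuous fun s : ℝ => 2 * s / Δ ^ 2).intervalIntegrable 0 Δ
  have hone : (∫ s in (0:ℝ)..Δ, 2 * s / Δ ^ 2) = 1 := by
    have h1 : (∫ s in (0:ℝ)..Δ, 2 * s / Δ ^ 2)
        = (2 / Δ ^ 2) * ∫ s in (0:ℝ)..Δ, s := by
      rw [← intervalIntegral.integral_const_mul]
      apply intervalIntegral.integral_congr
      intro s _
      ring
    rw [h1, integral_id]
    field_simp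
    ring
  have hsub2 : (∫ s in (0:ℝ)..Δ, (2 * s / Δ ^ 2) *
        (β * Real.exp (k * s) / (β * Real.exp (k * s) - u)))
        - (∫ s in (0:ℝ)..Δ, 2 * s / Δ ^ 2)
      = (2 / Δ ^ 2) * ∫ s in (0:ℝ)..Δ,
          s * (β * Real.exp (k * s) / (β * Real.exp (k * s) - u) - 1) := by
    rw [← intervalIntegral.integral_sub hintf hint2,
      ← intervalIntegral.integral_const_mul]
    apply intervalIntegral.integral_congr
    intro s _
    ring
  have hsplit : (∫ s in (0:ℝ)..Δ, (2 * s / Δ ^ 2) *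
        (β * Real.exp (k * s) / (β * Real.exp (k * s) - u))) - 1
      = (2 / Δ ^ 2) * ∫ s in (0:ℝ)..Δ,
          s * (β * Real.exp (k * s) / (β * Real.exp (k * s) - u) - 1) := by
    rw [← hsub2, hone]
  rw [hA, hC, hB, hsplit, hlog]
  field_simp
end
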